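/- arXiv:1203.1598 — 8 statements merged into one kernel-verified Lean document; each statement's English description precedes it below -/
import Mathlib

section
/- Let a ∈ ℂ, let U be an open neighborhood of a in ℂ, and let σ : ℂ → ℂ be holomorphic and injective on U. Then there exists a homeomorphism h of the Riemann sphere (the one-point compactification OnePoint ℂ of ℂ) and a neighborhood V ⊆ U of a such that for every z ∈ V one has h(z) = σ(z) (where points of ℂ are identified with their images in OnePoint ℂ). -/
open Complex Filter Metric Set
open scoped Topology Real NNReal

private lemma germ_aux_root (n : ℕ) (hn2 : 2 ≤ n) (g : ℂ → ℂ) (a : ℂ) (hg : AnalyticAt ℂ g a) (hg0 : g a ≠ 0) :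
    ∃ h : ℂ → ℂ, AnalyticAt ℂ h a ∧ h a ≠ 0 ∧ ∀ᶠ z in 𝓝 a, h z ^ n = g z := by
  have hn0 : n ≠ 0 := by omega
  obtain ⟨r, hr⟩ := IsAlgClosed.exists_pow_nat_eq (g a) (Nat.pos_of_ne_zero hn0)
  have hr0 : r ≠ 0 := by
    intro h
    apply hg0
    rw [← hr, h, zero_pow hn0]
  refine ⟨fun z => r * Complex.exp (Complex.log (g z / g a) * (n : ℂ)⁻¹), ?_, ?_, ?_⟩
  · apply analyticAt_const.mul
    apply analyticAt_cexp.comp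
    exact AnalyticAt.mul ((hg.div analyticAt_const hg0).clog (by simp [hg0, Complex.one_mem_slitPlane])) analyticAt_const
  · simp [hr0, Complex.exp_ne_zero]
  · have hgne : ∀ᶠ z in 𝓝 a, g z ≠ 0 := hg.continuousAt.eventually_ne hg0
    filter_upwards [hgne] with z hz
    have h1 : (g z / g a) ≠ 0 := div_ne_zero hz hg0
    rw [mul_pow, ← Complex.exp_nat_mul, hr]
    have : (n : ℂ) * (Complex.log (g z / g a) * (n : ℂ)⁻¹) = Complex.log (g z / g a) := by
      rw [mul_comm, mul_assoc, inv_mul_cancel₀ (Nat.cast_ne_zero.2 hn0), mul_one]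
    rw [this, Complex.exp_log h1, mul_div_cancel₀ _ hg0]

private lemma germ_aux_contra (n : ℕ) (hn2 : 2 ≤ n) (a : ℂ) (U : Set ℂ) (hU : IsOpen U) (haU : a ∈ U)
    (f : ℂ → ℂ) (h : ℂ → ℂ) (hh : AnalyticAt ℂ h a) (hh0 : h a ≠ 0)
    (hfψ : ∀ᶠ z in 𝓝 a, f z = ((z - a) * h z) ^ n)
    (hinj : ∀ z₁ ∈ U, ∀ z₂ ∈ U, f z₁ = f z₂ → z₁ = z₂) : False := by
  set ψ : ℂ → ℂ := fun z => (z - a) * h z with hψ_def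
  have hψa : ψ a = 0 := by simp [hψ_def]
  have hhd : HasStrictDerivAt h (deriv h a) a := by
    obtain ⟨p, hp⟩ := hh
    simpa [hp.deriv] using hp.hasStrictDerivAt
  have hψd : HasStrictDerivAt ψ (h a) a := by
    have h1 : HasStrictDerivAt (fun z : ℂ => z - a) 1 a := (hasStrictDerivAt_id a).sub_const a
    have := h1.mul hhd
    have h2 : HasStrictDerivAt ((fun z : ℂ => z - a) * h) (h a) a := by simpa using this
    exact h2
  have hmap : Filter.map ψ (𝓝 a) = 𝓝 0 := by
    have := hψd.map_nhds_eq hh0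
    rwa [hψa] at this
  set W : Set ℂ := {z | f z = ψ z ^ n} ∩ U with hW_def
  have hW : W ∈ 𝓝 a := Filter.inter_mem hfψ (hU.mem_nhds haU)
  have hWim : ψ '' W ∈ 𝓝 (0 : ℂ) := by
    rw [← hmap]
    exact Filter.image_mem_map hW
  obtain ⟨ε, hε, hball⟩ := Metric.mem_nhds_iff.mp hWim
  -- the root of unity
  set θ : ℝ := 2 * Real.pi / n with hθ_def
  set ζ : ℂ := Complex.exp (θ * Complex.I) with hζ_def
  have hζn : ζ ^ n = 1 := by
    rw [hζ_def, ← Complex.exp_nat_mul]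
    have : (n : ℂ) * (θ * Complex.I) = 2 * Real.pi * Complex.I := by
      rw [hθ_def]
      push_cast
      have hn0 : (n : ℂ) ≠ 0 := Nat.cast_ne_zero.2 (by omega)
      field_simp
    rw [this, Complex.exp_two_pi_mul_I]
  have hζ1 : ζ ≠ 1 := by
    rw [hζ_def, Ne, Complex.exp_eq_one_iff]
    rintro ⟨k, hk⟩
    have hI : ((θ : ℂ)) = k * (2 * Real.pi) := by
      have h2 : (θ : ℂ) * Complex.I = ((k : ℂ) * (2 * Real.pi)) * Complex.I := by
        rw [hk]; ring
      exact mul_right_cancel₀ Complex.I_ne_zero h2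
    have hθr : θ = k * (2 * Real.pi) := by exact_mod_cast hI
    have hπ : (0:ℝ) < Real.pi := Real.pi_pos
    have hθpos : 0 < θ := by
      rw [hθ_def]
      positivity
    have hθlt : θ < 2 * Real.pi := by
      rw [hθ_def]
      rw [div_lt_iff₀ (by positivity)]
      have h2n : (2:ℝ) ≤ n := by exact_mod_cast hn2
      nlinarith [hπ, h2n, mul_le_mul_of_nonneg_left h2n (by positivity : (0:ℝ) ≤ 2 * Real.pi)]
    rcases le_or_gt k 0 with hk0 | hk0
    · have : (k : ℝ) * (2 * Real.pi) ≤ 0 := by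
        apply mul_nonpos_of_nonpos_of_nonneg
        · exact_mod_cast hk0
        · positivity
      linarith
    · have hk1 : (1 : ℝ) ≤ k := by exact_mod_cast hk0
      nlinarith
  -- pick w
  set w : ℂ := ((ε / 2 : ℝ) : ℂ) with hw_def
  have hw0 : w ≠ 0 := by
    simp [hw_def]
    positivity
  have hwmem : w ∈ Metric.ball (0 : ℂ) ε := by
    simp only [Metric.mem_ball, dist_zero_right, hw_def, Complex.norm_real, Real.norm_eq_abs]
    rw [abs_of_pos (by positivity)]
    linarith
  have hζw : ‖ζ‖ = 1 := Complex.norm_exp_ofReal_mul_I θ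
  have hζwmem : ζ * w ∈ Metric.ball (0 : ℂ) ε := by
    simp only [Metric.mem_ball, dist_zero_right, norm_mul, hζw, one_mul]
    simpa using hwmem
  obtain ⟨z₁, hz₁W, hz₁⟩ := hball hwmem
  obtain ⟨z₂, hz₂W, hz₂⟩ := hball hζwmem
  have hz₁U : z₁ ∈ U := hz₁W.2
  have hz₂U : z₂ ∈ U := hz₂W.2
  have hfz₁ : f z₁ = w ^ n := by rw [hz₁W.1, hz₁]
  have hfz₂ : f z₂ = w ^ n := by
    rw [hz₂W.1, hz₂, mul_pow, hζn, one_mul]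
  have : z₁ = z₂ := hinj z₁ hz₁U z₂ hz₂U (by rw [hfz₁, hfz₂])
  apply hζ1
  have : ψ z₁ = ψ z₂ := by rw [this]
  rw [hz₁, hz₂] at this
  field_simp [hw0] at this
  exact this.symm

private lemma germ_deriv_ne_zero (a : ℂ) (U : Set ℂ) (hU : IsOpen U) (haU : a ∈ U)
    (σ : ℂ → ℂ) (hσ : DifferentiableOn ℂ σ U) (hinj : Set.InjOn σ U) :
    deriv σ a ≠ 0 := by
  intro hd0
  have hana : AnalyticAt ℂ σ a := hσ.analyticAt (hU.mem_nhds haU)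
  set f : ℂ → ℂ := fun z => σ z - σ a with hf_def
  have hfa : AnalyticAt ℂ f a := hana.sub analyticAt_const
  have hne : ¬ ∀ᶠ z in 𝓝 a, f z = 0 := by
    intro h
    have h1 : ∀ᶠ z in 𝓝[≠] a, f z = 0 := h.filter_mono nhdsWithin_le_nhds
    have h2 : ∀ᶠ z in 𝓝[≠] a, z ∈ U :=
      Filter.eventually_iff_exists_mem.2 ⟨U, nhdsWithin_le_nhds (hU.mem_nhds haU), fun z hz => hz⟩
    obtain ⟨z, hz0, hzU, hzne⟩ := (h1.and (h2.and eventually_mem_nhdsWithin)).exists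
    have : σ z = σ a := by simpa [hf_def, sub_eq_zero] using hz0
    exact hzne (hinj hzU haU this)
  obtain ⟨n, g, hg, hg0, hfg⟩ := hfa.exists_eventuallyEq_pow_smul_nonzero_iff.mpr hne
  have hn0 : n ≠ 0 := by
    intro h
    subst h
    have := hfg.self_of_nhds
    simp [hf_def] at this
    exact hg0 this.symm
  have hn1 : n ≠ 1 := by
    intro h
    subst h
    have hderiv : deriv f a = deriv (fun z => (z - a) ^ 1 • g z) a :=
      Filter.EventuallyEq.deriv_eq hfg
    have hD : HasDerivAt (fun z => (z - a) ^ 1 • g z) (g a) a := by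
      have h1 : HasDerivAt (fun z : ℂ => z - a) 1 a := (hasDerivAt_id a).sub_const a
      have h2 : HasDerivAt g (deriv g a) a := hg.differentiableAt.hasDerivAt
      have := h1.mul h2
      simp only [pow_one, smul_eq_mul]
      have h3 : HasDerivAt ((fun z : ℂ => z - a) * g) (g a) a := by simpa using this
      exact h3
    have hfd : deriv f a = deriv σ a := by
      simp [hf_def, deriv_sub_const]
    rw [hfd, hd0] at hderiv
    rw [hD.deriv] at hderiv
    exact hg0 hderiv.symm
  have hn2 : 2 ≤ n := by omega
  obtain ⟨h, hh_an, hh0, hpow⟩ := germ_aux_root n hn2 g a hg hg0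
  have hfψ : ∀ᶠ z in 𝓝 a, f z = ((z - a) * h z) ^ n := by
    filter_upwards [hfg, hpow] with z h1 h2
    rw [h1, smul_eq_mul, ← h2, mul_pow]
  exact germ_aux_contra n hn2 a U hU haU f h hh_an hh0 hfψ
    (fun z₁ hz₁ z₂ hz₂ hf => hinj hz₁ hz₂ (by
      have : σ z₁ - σ a = σ z₂ - σ a := hf
      linear_combination this))

set_option maxHeartbeats 1600000 in
/-- Any germ of automorphism of a neighborhood of a point of ℙ¹ = OnePoint ℂ
(represented in a chart by a holomorphic injective map on an open neighborhood
of `a` in ℂ) coincides near that point with a global homeomorphism of ℙ¹. -/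
theorem stmt_0 (a : ℂ) (U : Set ℂ) (hU : IsOpen U) (haU : a ∈ U)
    (σ : ℂ → ℂ) (hσ : DifferentiableOn ℂ σ U) (hinj : Set.InjOn σ U) :
    ∃ (h : Homeomorph (OnePoint ℂ) (OnePoint ℂ)) (V : Set ℂ),
      V ⊆ U ∧ V ∈ nhds a ∧ ∀ z ∈ V, h (z : OnePoint ℂ) = (σ z : OnePoint ℂ) := by
  have hd : deriv σ a ≠ 0 := germ_deriv_ne_zero a U hU haU σ hσ hinj
  have hana : AnalyticAt ℂ σ a := hσ.analyticAt (hU.mem_nhds haU)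
  set d : ℂ := deriv σ a with hd_def
  have hstrict : HasStrictDerivAt σ d a := by
    obtain ⟨p, hp⟩ := hana
    simpa [hd_def, hp.deriv] using hp.hasStrictDerivAt
  set A' : ℂ ≃L[ℂ] ℂ := ContinuousLinearEquiv.unitsEquivAut ℂ (Units.mk0 d hd) with hA'_def
  have hF : HasStrictFDerivAt σ (A' : ℂ →L[ℂ] ℂ) a := hstrict.hasStrictFDerivAt_equiv hd
  set N : ℝ≥0 := ‖(A'.symm : ℂ →L[ℂ] ℂ)‖₊ with hN_def
  have hNpos : 0 < N := A'.subsingleton_or_nnnorm_symm_pos.resolve_left (not_subsingleton ℂ)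
  set c : ℝ≥0 := N⁻¹ / 6 with hc_def
  have hc : 0 < c :=
    pos_iff_ne_zero.2 (div_ne_zero (inv_ne_zero hNpos.ne') (by norm_num))
  obtain ⟨s, hs_nhds, hs⟩ := hF.approximates_deriv_on_nhds (Or.inr hc)
  obtain ⟨r, hr, hball⟩ : ∃ r > 0, Metric.closedBall a (2 * r) ⊆ s ∩ U := by
    rcases Metric.mem_nhds_iff.mp (Filter.inter_mem hs_nhds (hU.mem_nhds haU)) with ⟨ε, hε, hsub⟩
    exact ⟨ε / 3, by positivity,
      (Metric.closedBall_subset_ball (by linarith)).trans hsub⟩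
  set A : ℂ → ℂ := fun z => σ a + (z - a) * d with hA_def
  set u : ℂ → ℂ := fun z => σ z - A z with hu_def
  set φ : ℂ → ℝ := fun z => max 0 (min 1 (2 - ‖z - a‖ / r)) with hφ_def
  set g : ℂ → ℂ := fun z => A z + φ z • u z with hg_def
  have hA'app : ∀ v : ℂ, (A' : ℂ →L[ℂ] ℂ) v = v * d := fun v => rfl
  have hφ1 : ∀ z, ‖z - a‖ ≤ r → φ z = 1 := by
    intro z hz
    have h1 : (1:ℝ) ≤ 2 - ‖z - a‖ / r := by
      rw [le_sub_iff_add_le]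
      have : ‖z - a‖ / r ≤ 1 := (div_le_one hr).2 hz
      linarith
    simp only [hφ_def]
    rw [min_eq_left h1, max_eq_right zero_le_one]
  have hφ0 : ∀ z, 2 * r ≤ ‖z - a‖ → φ z = 0 := by
    intro z hz
    have h1 : 2 - ‖z - a‖ / r ≤ 0 := by
      rw [sub_nonpos, le_div_iff₀ hr]
      linarith
    have h2 : min 1 (2 - ‖z - a‖ / r) ≤ 0 := le_trans (min_le_right _ _) h1
    simp only [hφ_def]
    rw [max_eq_left h2]
  have hφ_mem : ∀ z, 0 ≤ φ z ∧ φ z ≤ 1 := by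
    intro z
    refine ⟨le_max_left _ _, ?_⟩
    simp only [hφ_def]
    rw [max_le_iff]
    exact ⟨zero_le_one, min_le_left _ _⟩
  have hφ_lip : ∀ x y, |φ x - φ y| ≤ r⁻¹ * ‖x - y‖ := by
    intro x y
    set tx : ℝ := 2 - ‖x - a‖ / r with htx
    set ty : ℝ := 2 - ‖y - a‖ / r with hty
    have h1 : |φ x - φ y| ≤ |min 1 tx - min 1 ty| := by
      simpa only [max_comm] using abs_max_sub_max_le_abs (min 1 tx) (min 1 ty) 0
    have h2 : |min 1 tx - min 1 ty| ≤ |tx - ty| := by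
      simpa using abs_min_sub_min_le_max 1 tx 1 ty
    have h4 : |‖y - a‖ - ‖x - a‖| ≤ ‖x - y‖ := by
      have := abs_norm_sub_norm_le (y - a) (x - a)
      rw [sub_sub_sub_cancel_right] at this
      rw [norm_sub_rev x y]
      exact this
    calc |φ x - φ y| ≤ |tx - ty| := h1.trans h2
      _ = |‖y - a‖ - ‖x - a‖| / r := by
          rw [show tx - ty = (‖y - a‖ - ‖x - a‖) / r by rw [htx, hty]; ring,
            abs_div, abs_of_pos hr]
      _ ≤ ‖x - y‖ / r := by gcongr
      _ = r⁻¹ * ‖x - y‖ := by rw [div_eq_inv_mul]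
  have hu_lip : ∀ x, ‖x - a‖ ≤ 2 * r → ∀ y, ‖y - a‖ ≤ 2 * r → ‖u x - u y‖ ≤ c * ‖x - y‖ := by
    intro x hx y hy
    have hxs : x ∈ s := (hball (by simpa [Metric.mem_closedBall, dist_eq_norm] using hx)).1
    have hys : y ∈ s := (hball (by simpa [Metric.mem_closedBall, dist_eq_norm] using hy)).1
    have := hs x hxs y hys
    rw [hA'app] at this
    have heq : u x - u y = σ x - σ y - (x - y) * d := by
      simp only [hu_def, hA_def]
      ring
    rw [heq]
    exact this
  have hu_a : u a = 0 := by simp [hu_def, hA_def]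
  have hu_bound : ∀ x, ‖x - a‖ ≤ 2 * r → ‖u x‖ ≤ c * (2 * r) := by
    intro x hx
    have := hu_lip x hx a (by rw [sub_self, norm_zero]; positivity)
    rw [hu_a, sub_zero] at this
    exact this.trans (by gcongr)
  have hsplit : ∀ (p q : ℝ) (v w : ℂ), p • v - q • w = p • (v - w) + (p - q) • w := by
    intro p q v w
    rw [smul_sub, sub_smul]
    abel
  have key : ∀ x y, ‖x - a‖ ≤ 2 * r →
      ‖φ x • u x - φ y • u y‖ ≤ 3 * c * ‖x - y‖ := by
    intro x y hx
    by_cases hy : ‖y - a‖ ≤ 2 * r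
    · rw [hsplit (φ x) (φ y) (u x) (u y)]
      have t1 : ‖φ x • (u x - u y)‖ ≤ c * ‖x - y‖ := by
        rw [norm_smul, Real.norm_eq_abs, _root_.abs_of_nonneg (hφ_mem x).1]
        calc φ x * ‖u x - u y‖ ≤ 1 * (c * ‖x - y‖) := by
              apply mul_le_mul (hφ_mem x).2 (hu_lip x hx y hy) (norm_nonneg _) zero_le_one
          _ = c * ‖x - y‖ := one_mul _
      have t2 : ‖(φ x - φ y) • u y‖ ≤ 2 * c * ‖x - y‖ := by
        rw [norm_smul, Real.norm_eq_abs]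
        calc |φ x - φ y| * ‖u y‖ ≤ (r⁻¹ * ‖x - y‖) * (c * (2 * r)) := by
              apply mul_le_mul (hφ_lip x y) (hu_bound y hy) (norm_nonneg _)
              positivity
          _ = 2 * c * ‖x - y‖ * (r⁻¹ * r) := by ring
          _ = 2 * c * ‖x - y‖ := by rw [inv_mul_cancel₀ hr.ne', mul_one]
      calc ‖φ x • (u x - u y) + (φ x - φ y) • u y‖
          ≤ ‖φ x • (u x - u y)‖ + ‖(φ x - φ y) • u y‖ := norm_add_le _ _
        _ ≤ c * ‖x - y‖ + 2 * c * ‖x - y‖ := add_le_add t1 t2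
        _ = 3 * c * ‖x - y‖ := by ring
    · push_neg at hy
      have hφy : φ y = 0 := hφ0 y hy.le
      rw [hφy, zero_smul, sub_zero]
      have : φ x • u x = (φ x - φ y) • u x := by rw [hφy, sub_zero]
      rw [this, norm_smul, Real.norm_eq_abs]
      calc |φ x - φ y| * ‖u x‖ ≤ (r⁻¹ * ‖x - y‖) * (c * (2 * r)) := by
            apply mul_le_mul (hφ_lip x y) (hu_bound x hx) (norm_nonneg _)
            positivity
        _ = 2 * c * ‖x - y‖ * (r⁻¹ * r) := by ring
        _ = 2 * c * ‖x - y‖ := by rw [inv_mul_cancel₀ hr.ne', mul_one]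
        _ ≤ 3 * c * ‖x - y‖ := by
            have : (0:ℝ) ≤ c * ‖x - y‖ := by positivity
            nlinarith
  have happrox : ApproximatesLinearOn g (A' : ℂ →L[ℂ] ℂ) Set.univ (3 * c) := by
    intro x _ y _
    have heq : g x - g y - (A' : ℂ →L[ℂ] ℂ) (x - y) = φ x • u x - φ y • u y := by
      rw [hA'app]
      simp only [hg_def, hA_def]
      generalize φ x • u x = P
      generalize φ y • u y = Q
      ring
    rw [heq]
    have hcoe : ((3 * c : ℝ≥0) : ℝ) = 3 * (c : ℝ) := by push_cast; ring
    rw [hcoe]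
    by_cases hx : ‖x - a‖ ≤ 2 * r
    · exact key x y hx
    · by_cases hy : ‖y - a‖ ≤ 2 * r
      · rw [norm_sub_rev, norm_sub_rev x y]
        exact key y x hy
      · push_neg at hx hy
        rw [hφ0 x hx.le, hφ0 y hy.le]
        simp
        positivity
  have hlt : 3 * c < N⁻¹ := by
    have h6 : 3 * c = N⁻¹ / 2 := by
      rw [hc_def]
      rw [div_eq_mul_inv, div_eq_mul_inv, ← mul_assoc, mul_comm (3 : ℝ≥0), mul_assoc]
      congr 1
      norm_num
    rw [h6]
    exact NNReal.half_lt_self (inv_ne_zero hNpos.ne')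
  set homeo : ℂ ≃ₜ ℂ := happrox.toHomeomorph g (Or.inr hlt) with hhomeo_def
  have hhomeo_apply : ∀ z, homeo z = g z := fun z => rfl
  refine ⟨homeo.onePointCongr, Metric.ball a r, ?_, Metric.ball_mem_nhds a hr, ?_⟩
  · intro z hz
    have : z ∈ Metric.closedBall a (2 * r) := by
      rw [Metric.mem_closedBall]
      rw [Metric.mem_ball] at hz
      linarith
    exact (hball this).2
  · intro z hz
    rw [Metric.mem_ball, dist_eq_norm] at hz
    have hgz : g z = σ z := by
      simp only [hg_def]
      rw [hφ1 z hz.le, one_smul]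
      simp only [hu_def]
      ring
    have : homeo.onePointCongr (z : OnePoint ℂ) = ((homeo z : ℂ) : OnePoint ℂ) := rfl
    rw [this, hhomeo_apply, hgz]
end

section
/- Fix an integer n ≥ 2. Let P and Q be homogeneous polynomials of degree n in ℂ[x,y]. If x·∂Q/∂x − y·∂P/∂x − Q = 0 and x·∂Q/∂y − y·∂P/∂y + P = 0, then P = 0 and Q = 0. In other words, the linear endomorphism L(P,Q) = (x·∂Q/∂x − y·∂P/∂x − Q, x·∂Q/∂y − y·∂P/∂y + P) of the space of pairs of homogeneous polynomials of degree n is injective (hence, by finite-dimensionality, a linear isomorphism). -/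
open MvPolynomial

private lemma X_mul_pderiv_monomial (i : Fin 2) (m : Fin 2 →₀ ℕ) (c : ℂ) :
    X i * pderiv i (monomial m c) = (m i : ℂ) • monomial m c := by
  rw [pderiv_monomial, smul_monomial, X, monomial_mul]
  by_cases h : m i = 0
  · simp [h]
  · have hm : Finsupp.single i 1 + (m - Finsupp.single i 1) = m := by
      ext a
      simp only [Finsupp.add_apply, Finsupp.tsub_apply, Finsupp.single_apply]
      by_cases ha : i = a
      · subst ha; simp; omega
      · simp [ha]
    rw [hm, smul_eq_mul]
    ring_nf

private lemma euler_two {n : ℕ} {P : MvPolynomial (Fin 2) ℂ} (hP : P.IsHomogeneous n) :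
    X 0 * pderiv 0 P + X 1 * pderiv 1 P = C (n : ℂ) * P := by
  conv_lhs => rw [P.as_sum]
  rw [map_sum (pderiv 0), map_sum (pderiv 1), Finset.mul_sum, Finset.mul_sum,
    ← Finset.sum_add_distrib]
  conv_rhs => rw [P.as_sum, Finset.mul_sum]
  refine Finset.sum_congr rfl fun m hm => ?_
  rw [X_mul_pderiv_monomial, X_mul_pderiv_monomial, ← add_smul, ← Nat.cast_add]
  have hdeg : m 0 + m 1 = n := by
    have h0 := hP (MvPolynomial.mem_support_iff.mp hm)
    rw [← h0]
    simp [Finsupp.weight_apply, Finsupp.sum_fintype, Fin.sum_univ_two]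
  rw [hdeg, smul_eq_C_mul]

/-- The linear map `L(P,Q) = (x·∂Q/∂x − y·∂P/∂x − Q, x·∂Q/∂y − y·∂P/∂y + P)` on
pairs of homogeneous polynomials of degree `n ≥ 2` in `ℂ[x,y]` is injective. -/
theorem stmt_1 (n : ℕ) (hn : 2 ≤ n) (P Q : MvPolynomial (Fin 2) ℂ)
    (hP : P.IsHomogeneous n) (hQ : Q.IsHomogeneous n)
    (h1 : X 0 * pderiv 0 Q - X 1 * pderiv 0 P - Q = 0)
    (h2 : X 0 * pderiv 1 Q - X 1 * pderiv 1 P + P = 0) :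
    P = 0 ∧ Q = 0 := by
  have e1 := euler_two hP
  have e2 := euler_two hQ
  have key : X 0 * Q = X 1 * P := by
    have h3 : (C ((n : ℂ) - 1)) * (X 0 * Q - X 1 * P) = 0 := by
      have hC : (C ((n : ℂ) - 1) : MvPolynomial (Fin 2) ℂ) = C (n : ℂ) - 1 := by
        rw [map_sub, map_one]
      rw [hC]
      linear_combination (X 0 : MvPolynomial (Fin 2) ℂ) * h1 + X 1 * h2 - X 0 * e2 + X 1 * e1
    have hCne : (C ((n : ℂ) - 1) : MvPolynomial (Fin 2) ℂ) ≠ 0 := by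
      rw [Ne, MvPolynomial.C_eq_zero, sub_eq_zero]
      intro h
      have : (n : ℂ) = ((1 : ℕ) : ℂ) := by simpa using h
      have := Nat.cast_injective (R := ℂ) this
      omega
    rcases mul_eq_zero.mp h3 with h | h
    · exact absurd h hCne
    · exact sub_eq_zero.mp h
  have hd : Q + X 0 * pderiv 0 Q = X 1 * pderiv 0 P := by
    have hc := congrArg (pderiv 0) key
    rw [pderiv_mul, pderiv_mul, pderiv_X_self, pderiv_X_of_ne (by decide)] at hc
    linear_combination hc
  have hQ0 : Q = 0 := by
    have h2Q : (2 : MvPolynomial (Fin 2) ℂ) * Q = 0 := by linear_combination hd - h1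
    rcases mul_eq_zero.mp h2Q with h | h
    · exact absurd h two_ne_zero
    · exact h
  refine ⟨?_, hQ0⟩
  have : X 1 * P = 0 := by rw [← key, hQ0, mul_zero]
  rcases mul_eq_zero.mp this with h | h
  · exact absurd h (MvPolynomial.X_ne_zero 1)
  · exact h
end

section
/- Let a, b ∈ ℂ with a ≠ 0, and let h(z) = z/(a+bz) be the associated homography fixing 0, so h'(z) = a/(a+bz)². Assume a is not a root of unity (equivalently, h'(0) = 1/a is not a root of unity). If f : ℂ → ℂ is analytic at 0 and satisfies f(z/(a+bz)) · (a/(a+bz)²)² = f(z) for all z in some neighborhood of 0, then f vanishes on a neighborhood of 0. -/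
open Filter

/-- If `h(z) = z/(a+bz)` with `a` not a root of unity, and `f` is analytic at `0`
with `(f ∘ h) · (h′)² = f` near `0`, then `f` vanishes near `0`. -/
theorem stmt_2 (a b : ℂ) (ha : a ≠ 0) (hru : ∀ n : ℕ, 0 < n → a ^ n ≠ 1)
    (f : ℂ → ℂ) (hf : AnalyticAt ℂ f 0)
    (heq : ∀ᶠ z in nhds (0 : ℂ), f (z / (a + b * z)) * (a / (a + b * z) ^ 2) ^ 2 = f z) :
    ∀ᶠ z in nhds (0 : ℂ), f z = 0 := by
  by_cases htop : analyticOrderAt f 0 = ⊤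
  · exact analyticOrderAt_eq_top.mp htop
  · exfalso
    obtain ⟨n, hn⟩ : ∃ n : ℕ, analyticOrderAt f 0 = n := by
      lift analyticOrderAt f 0 to ℕ using htop with m hm
      exact ⟨m, rfl⟩
    obtain ⟨g, hg, hg0, hfg⟩ := hf.analyticOrderAt_eq_natCast.mp hn
    simp only [sub_zero] at hfg
    -- h is continuous at 0 and h 0 = 0
    have hden : ContinuousAt (fun z : ℂ => a + b * z) 0 := by fun_prop
    have hdne : (a + b * 0) ≠ 0 := by simpa using ha
    have hh : Tendsto (fun z : ℂ => z / (a + b * z)) (nhds 0) (nhds 0) := by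
      have : ContinuousAt (fun z : ℂ => z / (a + b * z)) 0 :=
        ContinuousAt.div continuousAt_id hden hdne
      simpa using this.tendsto
    -- eventually, the key equation for g
    have hev : ∀ᶠ z in nhdsWithin (0 : ℂ) {0}ᶜ,
        g (z / (a + b * z)) * a ^ 2 / (a + b * z) ^ (n + 4) = g z := by
      have h1 : ∀ᶠ z in nhds (0 : ℂ), f (z / (a + b * z)) =
          (z / (a + b * z)) ^ n * g (z / (a + b * z)) := hh.eventually hfg
      have h2 : ∀ᶠ z in nhds (0 : ℂ), a + b * z ≠ 0 :=
        hden.tendsto.eventually_ne (by simpa using ha)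
      filter_upwards [nhdsWithin_le_nhds heq, nhdsWithin_le_nhds h1,
        nhdsWithin_le_nhds hfg, nhdsWithin_le_nhds h2, self_mem_nhdsWithin]
        with z e1 e2 e3 e4 hz
      have hz0 : z ≠ 0 := hz
      rw [e2, e3] at e1
      rw [smul_eq_mul, div_pow, div_pow, ← pow_mul] at e1
      rw [div_eq_iff (pow_ne_zero _ e4)]
      field_simp at e1
      have key : z ^ n * (g (z / (a + b * z)) * a ^ 2) =
          z ^ n * (g z * (a + b * z) ^ (n + 4)) := by
        have hp : (a + b * z) ^ (n + 4) = (a + b * z) ^ n * ((a + b * z) ^ 2) ^ 2 := by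
          ring
        rw [hp]; linear_combination z ^ n * e1
      exact mul_left_cancel₀ (pow_ne_zero n hz0) key
    -- take limits along the punctured neighborhood
    have hgc : ContinuousAt g 0 := hg.continuousAt
    have hL : Tendsto (fun z : ℂ => g (z / (a + b * z)) * a ^ 2 / (a + b * z) ^ (n + 4))
        (nhdsWithin (0 : ℂ) {0}ᶜ) (nhds (g 0 * a ^ 2 / a ^ (n + 4))) := by
      apply Tendsto.mono_left _ nhdsWithin_le_nhds
      have : Tendsto (fun z : ℂ => g (z / (a + b * z))) (nhds 0) (nhds (g 0)) :=
        hgc.tendsto.comp hh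
      have hd : Tendsto (fun z : ℂ => (a + b * z) ^ (n + 4)) (nhds 0)
          (nhds (a ^ (n + 4))) := by
        have := (hden.pow (n + 4)).tendsto
        simpa [Pi.pow_def] using this
      exact ((this.mul tendsto_const_nhds).div hd (pow_ne_zero _ ha))
    have hR : Tendsto g (nhdsWithin (0 : ℂ) {0}ᶜ) (nhds (g 0)) :=
      hgc.tendsto.mono_left nhdsWithin_le_nhds
    have hkey : g 0 * a ^ 2 / a ^ (n + 4) = g 0 :=
      tendsto_nhds_unique (hL.congr' hev) hR
    have hpow : a ^ (n + 2) = 1 := by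
      have h4 : a ^ (n + 4) = a ^ (n + 2) * a ^ 2 := by ring
      rw [div_eq_iff (pow_ne_zero _ ha), h4] at hkey
      have ha2 : (a : ℂ) ^ 2 ≠ 0 := pow_ne_zero _ ha
      have : g 0 * a ^ 2 = g 0 * a ^ (n + 2) * a ^ 2 := by linear_combination hkey
      have := mul_right_cancel₀ ha2 this
      have h1 : g 0 * 1 = g 0 * a ^ (n + 2) := by linear_combination this
      exact (mul_left_cancel₀ hg0 h1).symm
    exact hru (n + 2) (by omega) hpow
end

section
/- Let b ∈ ℂ with b ≠ 0, and let h(z) = z/(1+bz) be the associated homography fixing 0 and tangent to the identity, so h'(z) = 1/(1+bz)². If f : ℂ → ℂ is analytic at 0 and satisfies f(z/(1+bz)) · (1/(1+bz)²)² = f(z) for all z in some neighborhood of 0, then f vanishes on a neighborhood of 0. -/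
open Filter

/-- If `h(z) = z/(1+bz)` with `b ≠ 0`, and `f` is analytic at `0`
with `(f ∘ h) · (h′)² = f` near `0`, then `f` vanishes near `0`. -/
theorem stmt_3 (b : ℂ) (hb : b ≠ 0)
    (f : ℂ → ℂ) (hf : AnalyticAt ℂ f 0)
    (heq : ∀ᶠ z in nhds (0 : ℂ),
      f (z / (1 + b * z)) * (1 / (1 + b * z) ^ 2) ^ 2 = f z) :
    ∀ᶠ z in nhds (0 : ℂ), f z = 0 := by
  obtain ⟨ε, hε, hU⟩ := Metric.eventually_nhds_iff.mp heq
  -- Key: f vanishes at points (t:ℂ)/b for small real t > 0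
  have key : ∀ t : ℝ, 0 < t → ‖(t:ℂ)/b‖ < ε → f ((t:ℂ)/b) = 0 := by
    intro t ht hz
    set z : ℂ := (t:ℂ)/b with hzdef
    have hbz : b * z = (t:ℂ) := by rw [hzdef]; field_simp
    have hden : ∀ k : ℕ, (1 + (k:ℂ)*t) ≠ 0 := by
      intro k
      have : ((1 + (k:ℝ)*t : ℝ) : ℂ) ≠ 0 := by
        push_cast
        exact_mod_cast ne_of_gt (by positivity : (0:ℝ) < 1 + (k:ℝ)*t)
      simpa using this
    have claim : ∀ k : ℕ, f (z/(1+(k:ℂ)*t)) * (1/(1+(k:ℂ)*t)^2)^2 = f z := by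
      intro k
      induction k with
      | zero => simp
      | succ k ih =>
        set zk : ℂ := z/(1+(k:ℂ)*t) with hzk
        have hnorm : ‖zk‖ < ε := by
          rw [hzk, norm_div]
          have h1 : (1:ℝ) ≤ ‖(1 + (k:ℂ)*t)‖ := by
            have : (1 + (k:ℂ)*t) = ((1 + (k:ℝ)*t : ℝ) : ℂ) := by push_cast; ring
            rw [this, Complex.norm_real, Real.norm_eq_abs,
              abs_of_pos (by positivity)]
            nlinarith [Nat.cast_nonneg (α := ℝ) k]
          calc ‖z‖ / ‖(1 + (k:ℂ)*t)‖ ≤ ‖z‖ / 1 :=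
                div_le_div_of_nonneg_left (norm_nonneg _) one_pos h1
            _ < ε := by simpa using hz
        have happ := hU (by simpa using hnorm)
        have h1 : (1 + ((k:ℂ)+1)*t) ≠ 0 := by
          have h := hden (k+1); push_cast at h; convert h using 2
        have h2 : (1 + (k:ℂ)*t) ≠ 0 := hden k
        have hbzk : 1 + b * zk = (1+((k:ℂ)+1)*t)/(1+(k:ℂ)*t) := by
          rw [hzk, ← mul_div_assoc, hbz]
          rw [eq_div_iff h2, add_mul, div_mul_cancel₀ _ h2]
          ring
        have harg : zk / (1 + b * zk) = z/(1+((k:ℂ)+1)*t) := by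
          rw [hbzk, hzk]
          field_simp
        rw [harg, hbzk] at happ
        have : f (z / (1 + ((k:ℂ)+1) * t)) * (1 / (1 + ((k:ℂ)+1)*t)^2)^2
            = f zk * (1/(1+(k:ℂ)*t)^2)^2 := by
          have := congrArg (· * (1/(1+(k:ℂ)*t)^2)^2) happ
          rw [← this]
          field_simp
        push_cast
        rw [this]
        exact ih
    -- limit
    have hlim1 : Tendsto (fun k : ℕ => z/(1+(k:ℂ)*t)) atTop (nhds 0) := by
      rw [tendsto_zero_iff_norm_tendsto_zero]
      have : ∀ k : ℕ, ‖z/(1+(k:ℂ)*t)‖ = ‖z‖ / (1 + k*t) := by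
        intro k
        rw [norm_div]
        congr 1
        have : (1 + (k:ℂ)*t) = ((1 + (k:ℝ)*t : ℝ) : ℂ) := by push_cast; ring
        rw [this, Complex.norm_real, Real.norm_eq_abs, abs_of_pos (by positivity)]
      simp only [this]
      apply Tendsto.div_atTop tendsto_const_nhds
      apply tendsto_atTop_add_const_left
      exact (tendsto_natCast_atTop_atTop (R := ℝ)).atTop_mul_const ht
    have hlim2 : Tendsto (fun k : ℕ => (1/(1+(k:ℂ)*t)^2)^2) atTop (nhds 0) := by
      rw [tendsto_zero_iff_norm_tendsto_zero]
      have : ∀ k : ℕ, ‖(1/(1+(k:ℂ)*t)^2)^2‖ = 1 / (1 + k*t)^4 := by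
        intro k
        rw [norm_pow, norm_div, norm_pow, norm_one]
        have : (1 + (k:ℂ)*t) = ((1 + (k:ℝ)*t : ℝ) : ℂ) := by push_cast; ring
        rw [this, Complex.norm_real, Real.norm_eq_abs, abs_of_pos (by positivity)]
        field_simp
      simp only [this]
      apply Tendsto.div_atTop tendsto_const_nhds
      apply (tendsto_pow_atTop (by norm_num : (4:ℕ) ≠ 0)).comp
      apply tendsto_atTop_add_const_left
      exact (tendsto_natCast_atTop_atTop (R := ℝ)).atTop_mul_const ht
    have hcont : Tendsto (fun k : ℕ => f (z/(1+(k:ℂ)*t))) atTop (nhds (f 0)) :=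
      (hf.continuousAt.tendsto).comp hlim1
    have hlim : Tendsto (fun k : ℕ => f (z/(1+(k:ℂ)*t)) * (1/(1+(k:ℂ)*t)^2)^2)
        atTop (nhds 0) := by
      simpa using hcont.mul hlim2
    have hconst : Tendsto (fun _ : ℕ => f z) atTop (nhds (f z)) := tendsto_const_nhds
    have := tendsto_nhds_unique (hconst.congr fun k => (claim k).symm) hlim
    exact this
  -- frequently zero near 0
  have hu0 : Tendsto (fun n : ℕ => (((1/(n+1) : ℝ)) : ℂ)/b) atTop (nhds 0) := by
    have h1 : Tendsto (fun n : ℕ => (1/(n+1) : ℝ)) atTop (nhds 0) :=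
      tendsto_one_div_add_atTop_nhds_zero_nat
    have h2 : Tendsto (fun n : ℕ => (((1/(n+1) : ℝ)) : ℂ)) atTop (nhds 0) := by
      simpa [Function.comp_def] using (Complex.continuous_ofReal.tendsto 0).comp h1
    simpa using h2.div_const b
  have hune : ∀ n : ℕ, (((1/(n+1) : ℝ)) : ℂ)/b ≠ 0 := by
    intro n
    apply div_ne_zero _ hb
    exact_mod_cast ne_of_gt (by positivity : (0:ℝ) < 1/(n+1))
  have hu : Tendsto (fun n : ℕ => (((1/(n+1) : ℝ)) : ℂ)/b) atTop
      (nhdsWithin (0:ℂ) {0}ᶜ) := by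
    apply tendsto_nhdsWithin_of_tendsto_nhds_of_eventually_within _ hu0
    filter_upwards with n
    simpa using hune n
  have hsmall : ∀ᶠ n : ℕ in atTop, ‖(((1/(n+1) : ℝ)) : ℂ)/b‖ < ε := by
    have hn0 : Tendsto (fun n : ℕ => ‖(((1/(n+1) : ℝ)) : ℂ)/b‖) atTop (nhds 0) := by
      simpa using hu0.norm
    exact hn0.eventually_lt_const hε
  have hfreq : ∃ᶠ z in nhdsWithin (0:ℂ) {0}ᶜ, f z = 0 := by
    apply hu.frequently
    apply Eventually.frequently
    filter_upwards [hsmall] with n hn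
    exact key (1/(n+1)) (by positivity) hn
  exact hf.frequently_zero_iff_eventually_zero.mp hfreq
end

section
/- Let f : ℂ → ℂ be analytic at 0. If the set of pairs (a,b) ∈ ℂ × ℂ with a ≠ 0 such that f(z/(a+bz)) · (a/(a+bz)²)² = f(z) for all z in some neighborhood of 0 is infinite, then f vanishes on a neighborhood of 0. -/
open Filter

private lemma key_ab (g : ℂ → ℂ) (hg : AnalyticAt ℂ g 0) (hg0 : g 0 ≠ 0) (n : ℕ)
    (a b : ℂ) (ha : a ≠ 0)
    (heq : ∀ᶠ z in nhds (0:ℂ),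
      (z/(a+b*z))^n * g (z/(a+b*z)) * (a/(a+b*z)^2)^2 = z^n * g z) :
    a ^ (n+2) = 1 ∧ b * (g 0 * ((n:ℂ)+4)) = deriv g 0 * (1 - a) := by
  set m : ℤ := -((n:ℤ)+4) with hm
  have hzpow : ∀ w : ℂ, w ^ m = (w ^ (n+4))⁻¹ := by
    intro w
    rw [hm, zpow_neg]
    norm_cast
  set G : ℂ → ℂ := fun z => g (z/(a+b*z)) * (a^2 * (a+b*z)^m) with hG
  have hHne : ∀ᶠ z in nhds (0:ℂ), a + b*z ≠ 0 := by
    have hc : ContinuousAt (fun z : ℂ => a + b*z) 0 := by fun_prop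
    have := hc.eventually_ne (by simpa using ha)
    simpa using this
  have hev : ∀ᶠ z in nhds (0:ℂ), z ≠ 0 → G z = g z := by
    filter_upwards [heq, hHne] with z h1 h2 hz
    have : z^n * G z = z^n * g z := by
      rw [← h1, hG]
      simp only [hzpow]
      rw [div_pow]
      field_simp
      ring
    exact mul_left_cancel₀ (pow_ne_zero n hz) this
  have hinner : ContinuousAt (fun z : ℂ => z/(a+b*z)) 0 :=
    ContinuousAt.div continuousAt_id (by fun_prop) (by simpa using ha)
  have hGcont : ContinuousAt G 0 := by
    rw [hG]
    apply ContinuousAt.mul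
    · show ContinuousAt (g ∘ (fun z : ℂ => z/(a+b*z))) 0
      apply ContinuousAt.comp _ hinner
      simpa using hg.continuousAt
    · exact continuousAt_const.mul
        (((by fun_prop : ContinuousAt (fun z : ℂ => a+b*z) 0)).zpow₀ m
          (Or.inl (by simpa using ha)))
  have hG0 : G 0 = g 0 := by
    have h1 : Tendsto G (nhdsWithin 0 {(0:ℂ)}ᶜ) (nhds (G 0)) := hGcont.continuousWithinAt
    have h2 : Tendsto g (nhdsWithin 0 {(0:ℂ)}ᶜ) (nhds (g 0)) :=
      hg.continuousAt.continuousWithinAt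
    have h3 : Tendsto g (nhdsWithin 0 {(0:ℂ)}ᶜ) (nhds (G 0)) := by
      apply h1.congr'
      rw [eventuallyEq_nhdsWithin_iff]
      filter_upwards [hev] with z hz h using hz h
    exact tendsto_nhds_unique h3 h2
  have hGg : ∀ᶠ z in nhds (0:ℂ), G z = g z := by
    filter_upwards [hev] with z hz
    rcases eq_or_ne z 0 with rfl | h
    · exact hG0
    · exact hz h
  have hA : a ^ (n+2) = 1 := by
    rw [hG] at hG0
    simp only [mul_zero, add_zero, zero_div, hzpow] at hG0
    field_simp at hG0
    have h2 : a ^ 2 = a ^ (n+4) := hG0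
    have h3 : a^2 * a^(n+2) = a^2 * 1 := by
      rw [← pow_add, mul_one, show 2+(n+2) = n+4 from by ring, ← h2]
    exact mul_left_cancel₀ (pow_ne_zero 2 ha) h3
  refine ⟨hA, ?_⟩
  have ha0 : a + b*0 ≠ 0 := by simpa using ha
  have hH : HasDerivAt (fun z : ℂ => a + b*z) b 0 := by
    simpa using ((hasDerivAt_id (0:ℂ)).const_mul b).const_add a
  have hh : HasDerivAt (fun z : ℂ => z/(a+b*z)) (1/a) 0 := by
    have := (hasDerivAt_id (0:ℂ)).div hH ha0
    refine this.congr_deriv ?_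
    simp
    field_simp
  have hd0 : HasDerivAt g (deriv g 0) ((fun z : ℂ => z/(a+b*z)) 0) := by
    simpa using hg.differentiableAt.hasDerivAt
  have hgh : HasDerivAt (fun z : ℂ => g (z/(a+b*z))) (deriv g 0 * (1/a)) 0 := by
    have := hd0.comp 0 hh
    simpa [Function.comp_def] using this
  have hzp : HasDerivAt (fun z : ℂ => (a+b*z)^m) ((m:ℂ) * a^(m-1) * b) 0 := by
    have := (hasDerivAt_zpow m (a+b*0) (Or.inl ha0)).comp 0 hH
    simpa [Function.comp_def] using this
  have hGd : HasDerivAt G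
      (deriv g 0 * (1/a) * (a^2 * a^m) + g 0 * (a^2 * ((m:ℂ) * a^(m-1) * b))) 0 := by
    rw [hG]
    have := hgh.mul (hzp.const_mul (a^2))
    simpa [Pi.mul_def] using this
  have h1 : deriv G 0 = deriv g 0 := Filter.EventuallyEq.deriv_eq hGg
  rw [hGd.deriv] at h1
  have e1 : a ^ m = (a^2)⁻¹ := by
    rw [hzpow]
    congr 1
    calc a ^ (n+4) = a ^ (n+2) * a^2 := by ring
    _ = a ^ 2 := by rw [hA, one_mul]
  have e2 : a ^ (m-1) = (a^3)⁻¹ := by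
    have : m - 1 = -(((n+5:ℕ)):ℤ) := by rw [hm]; push_cast; ring
    rw [this, zpow_neg, zpow_natCast]
    congr 1
    calc a ^ (n+5) = a ^ (n+2) * a^3 := by ring
    _ = a ^ 3 := by rw [hA, one_mul]
  have e3 : (m:ℂ) = -((n:ℂ)+4) := by rw [hm]; push_cast; ring
  rw [e1, e2, e3] at h1
  field_simp at h1
  have hfinal : a^3 * (b * (g 0 * ((n:ℂ)+4))) = a^3 * (deriv g 0 * (1-a)) := by
    linear_combination (-a^3) * h1
  exact mul_left_cancel₀ (pow_ne_zero 3 ha) hfinal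

/-- If `f` is analytic at `0` and the set of homographies `h(z) = z/(a+bz)` (with
`a ≠ 0`) satisfying `(f ∘ h) · (h′)² = f` near `0` is infinite, then `f` vanishes
near `0`. -/
theorem stmt_4 (f : ℂ → ℂ) (hf : AnalyticAt ℂ f 0)
    (hinf : {p : ℂ × ℂ | p.1 ≠ 0 ∧
      ∀ᶠ z in nhds (0 : ℂ),
        f (z / (p.1 + p.2 * z)) * (p.1 / (p.1 + p.2 * z) ^ 2) ^ 2 = f z}.Infinite) :
    ∀ᶠ z in nhds (0 : ℂ), f z = 0 := by
  by_contra hne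
  have hord : analyticOrderAt f 0 ≠ ⊤ := fun h => hne (analyticOrderAt_eq_top.mp h)
  obtain ⟨n, hn⟩ := WithTop.ne_top_iff_exists.mp hord
  obtain ⟨g, hg, hg0, hfg⟩ := (hf.analyticOrderAt_eq_natCast (n := n)).mp hn.symm
  set S : Set (ℂ × ℂ) := {p : ℂ × ℂ | p.1 ≠ 0 ∧
      ∀ᶠ z in nhds (0 : ℂ),
        f (z / (p.1 + p.2 * z)) * (p.1 / (p.1 + p.2 * z) ^ 2) ^ 2 = f z} with hS
  have hkey : ∀ p ∈ S, p.1^(n+2) = 1 ∧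
      p.2 * (g 0 * ((n:ℂ)+4)) = deriv g 0 * (1 - p.1) := by
    rintro ⟨a, b⟩ ⟨ha, hab⟩
    apply key_ab g hg hg0 n a b ha
    have htend : Tendsto (fun z : ℂ => z/(a+b*z)) (nhds 0) (nhds 0) := by
      have hc : ContinuousAt (fun z : ℂ => z/(a+b*z)) 0 :=
        ContinuousAt.div continuousAt_id (by fun_prop) (by simpa using ha)
      simpa using hc.tendsto
    have h2 := htend.eventually hfg
    filter_upwards [hab, hfg, h2] with z e1 e2 e3
    simp only [sub_zero, smul_eq_mul] at e2 e3
    rw [e2, e3] at e1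
    linear_combination e1
  have hinj : Set.InjOn Prod.fst S := by
    rintro ⟨a1, b1⟩ h1 ⟨a2, b2⟩ h2 (h : a1 = a2)
    obtain ⟨_, e1⟩ := hkey _ h1
    obtain ⟨_, e2⟩ := hkey _ h2
    have hne4 : g 0 * ((n:ℂ)+4) ≠ 0 := by
      apply mul_ne_zero hg0
      have : ((n+4:ℕ):ℂ) ≠ 0 := Nat.cast_ne_zero.mpr (by omega)
      push_cast at this
      exact this
    have hb : b1 = b2 := by
      apply mul_right_cancel₀ hne4
      rw [e1, e2, h]
    simp [Prod.ext_iff, h, hb]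
  have himg : (Prod.fst '' S).Infinite := hinf.image hinj
  have hsub : (Prod.fst '' S) ⊆ {x : ℂ | x^(n+2) = 1} := by
    rintro _ ⟨p, hp, rfl⟩
    exact (hkey p hp).1
  have hfin : ({x : ℂ | x^(n+2) = 1}).Finite := by
    have hp0 : (Polynomial.X^(n+2) - Polynomial.C 1 : Polynomial ℂ) ≠ 0 :=
      Polynomial.X_pow_sub_C_ne_zero (by omega) 1
    have := Polynomial.finite_setOf_isRoot hp0
    convert this using 1
    ext x
    simp [Polynomial.IsRoot, sub_eq_zero]
  exact himg (hfin.subset hsub)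
end

section
/- Let σ : ℂ → ℂ be analytic at 0 with σ(0) = 0 and σ′(0) ≠ 0. Call a pair (a,b) ∈ ℂ × ℂ with a ≠ 0 a homographic symmetry of σ if there exist c, d ∈ ℂ with c ≠ 0 such that σ(z/(a+bz)) / (c + d·σ(z/(a+bz))) = σ(z) for all z in some neighborhood of 0 (i.e. h₁∘σ∘h = σ as germs at 0, where h(z) = z/(a+bz) and h₁(w) = w/(c+dw)). If the set of homographic symmetries of σ is infinite, then σ is itself a homography: there exist a′, b′ ∈ ℂ with a′ ≠ 0 such that σ(z) = z/(a′+b′z) for all z in some neighborhood of 0; moreover in that case every pair (a,b) with a ≠ 0 is a homographic symmetry of σ. -/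
open Filter

/-- `(a, b)` (with `a ≠ 0`) is a homographic symmetry of `σ` if `h₁ ∘ σ ∘ h = σ`
as germs at `0`, where `h(z) = z/(a+bz)` and `h₁(w) = w/(c+dw)` for some
homography `h₁` fixing `0`. -/
def IsHomographicSymmetry (σ : ℂ → ℂ) (p : ℂ × ℂ) : Prop :=
  p.1 ≠ 0 ∧ ∃ c d : ℂ, c ≠ 0 ∧
    ∀ᶠ z in nhds (0 : ℂ),
      σ (z / (p.1 + p.2 * z)) / (c + d * σ (z / (p.1 + p.2 * z))) = σ z

namespace Stmt5Aux

theorem ptwise (a b c d z t s : ℂ) (hz : z ≠ 0) (h7 : a + b * z ≠ 0) (hs : s ≠ 0)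
    (h4 : t ≠ 0) (h6 : c * s * (a + b * z) + d * z ≠ 0)
    (h1 : z / (a + b * z) / s / (c + d * (z / (a + b * z) / s)) = z / t) :
    t = c * (a + b * z) * s + d * z := by
  have hden : c + d * (z / (a + b * z) / s)
      = (c * s * (a + b * z) + d * z) / ((a + b * z) * s) := by
    rw [div_div, eq_div_iff (mul_ne_zero h7 hs), add_mul, mul_assoc d,
      div_mul_cancel₀ _ (mul_ne_zero h7 hs)]; ring
  rw [hden, div_div z (a + b * z) s, div_div_div_cancel_right₀ (mul_ne_zero h7 hs)] at h1
  have h2 := (div_eq_div_iff h6 h4).mp h1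
  linear_combination mul_left_cancel₀ hz h2

lemma u_tendsto (a b : ℂ) (ha : a ≠ 0) :
    Tendsto (fun z : ℂ => z / (a + b * z)) (nhds 0) (nhds 0) := by
  have hcont : ContinuousAt (fun z : ℂ => z / (a + b * z)) 0 := by
    apply ContinuousAt.div continuousAt_id (by fun_prop)
    simpa using ha
  simpa using hcont.tendsto

lemma u_analytic (a b : ℂ) (ha : a ≠ 0) :
    AnalyticAt ℂ (fun z : ℂ => z / (a + b * z)) 0 := by
  apply AnalyticAt.div analyticAt_id
  · exact analyticAt_const.add (analyticAt_const.mul analyticAt_id)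
  · simpa using ha

lemma comp_analytic (τ : ℂ → ℂ) (hτ : AnalyticAt ℂ τ 0) (a b : ℂ) (ha : a ≠ 0) :
    AnalyticAt ℂ (fun z : ℂ => τ (z / (a + b * z))) 0 := by
  refine AnalyticAt.comp ?_ (u_analytic a b ha)
  simpa using hτ

lemma u_hasDeriv (a b : ℂ) (ha : a ≠ 0) :
    HasDerivAt (fun z : ℂ => z / (a + b * z))
      ((1 * (a + b * 0) - 0 * (b * 1)) / (a + b * 0) ^ 2) 0 := by
  refine (hasDerivAt_id 0).div (((hasDerivAt_id 0).const_mul b).const_add a) ?_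
  simpa using ha

lemma e6_ev (a b : ℂ) (ha : a ≠ 0) : ∀ᶠ z in nhds (0:ℂ), a + b * z ≠ 0 := by
  have : ContinuousAt (fun z : ℂ => a + b * z) 0 := by fun_prop
  exact this.eventually_ne (by simpa using ha)

lemma homog_sym (σ : ℂ → ℂ) (a' b' : ℂ) (ha' : a' ≠ 0)
    (hσ : ∀ᶠ z in nhds (0 : ℂ), σ z = z / (a' + b' * z))
    (a b : ℂ) (ha : a ≠ 0) : IsHomographicSymmetry σ (a, b) := by
  refine ⟨ha, 1/a, b' - (a'*b + b')/a, one_div_ne_zero ha, ?_⟩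
  have e2 : ∀ᶠ z in nhds (0:ℂ), σ (z / (a + b * z))
      = (z / (a + b * z)) / (a' + b' * (z / (a + b * z))) := (u_tendsto a b ha).eventually hσ
  have e6 := e6_ev a b ha
  have e7 : ∀ᶠ z in nhds (0:ℂ), a' * a + (a' * b + b') * z ≠ 0 := by
    have : ContinuousAt (fun z : ℂ => a' * a + (a' * b + b') * z) 0 := by fun_prop
    exact this.eventually_ne (by simpa using mul_ne_zero ha' ha)
  have e8 : ∀ᶠ z in nhds (0:ℂ), a' + b' * z ≠ 0 := by
    have : ContinuousAt (fun z : ℂ => a' + b' * z) 0 := by fun_prop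
    exact this.eventually_ne (by simpa using ha')
  filter_upwards [hσ, e2, e6, e7, e8] with z h1 h2 h6 h7 h8
  rw [h1, h2]
  rw [show a' + b' * (z/(a+b*z)) = (a'*a + (a'*b+b')*z)/(a+b*z) by
    rw [eq_div_iff h6, add_mul, mul_assoc b', div_mul_cancel₀ _ h6]; ring]
  rw [div_div_div_cancel_right₀ h6]
  rw [show 1/a + (b' - (a'*b + b')/a) * (z / (a'*a + (a'*b+b')*z))
      = (a' + b' * z)/(a'*a + (a'*b+b')*z) by
      rw [eq_div_iff h7, add_mul, mul_assoc (b' - (a'*b + b')/a), div_mul_cancel₀ _ h7]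
      field_simp; ring]
  rw [div_div_div_cancel_right₀ h7]

lemma tau_eq (σ τ : ℂ → ℂ) (hτ : AnalyticAt ℂ τ 0) (hτ0 : τ 0 ≠ 0)
    (hστ : ∀ᶠ z in nhds (0:ℂ), σ z = z / τ z) (a b c d : ℂ) (ha : a ≠ 0) (hc : c ≠ 0)
    (heq : ∀ᶠ z in nhds (0:ℂ),
      σ (z / (a + b * z)) / (c + d * σ (z / (a + b * z))) = σ z) :
    c * a = 1 ∧ ∀ᶠ z in nhds (0:ℂ),
      τ z = c * (a + b * z) * τ (z / (a + b * z)) + d * z := by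
  have htu := u_tendsto a b ha
  have e2 : ∀ᶠ z in nhds (0:ℂ), σ (z / (a + b * z))
      = (z / (a + b * z)) / τ (z / (a + b * z)) := htu.eventually hστ
  have e3 : ∀ᶠ z in nhds (0:ℂ), τ z ≠ 0 := hτ.continuousAt.eventually_ne hτ0
  have e4 : ∀ᶠ z in nhds (0:ℂ), τ (z / (a + b * z)) ≠ 0 := htu.eventually e3
  have e6 := e6_ev a b ha
  have e5 : ∀ᶠ z in nhds (0:ℂ),
      c * τ (z / (a + b * z)) * (a + b * z) + d * z ≠ 0 := by
    have hcont : ContinuousAt (fun z : ℂ =>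
        c * τ (z / (a + b * z)) * (a + b * z) + d * z) 0 := by
      have h1 : ContinuousAt (fun z : ℂ => τ (z / (a + b * z))) 0 := by
        have hτc : ContinuousAt τ ((0:ℂ) / (a + b * 0)) := by
          rw [zero_div]; exact hτ.continuousAt
        exact ContinuousAt.comp hτc (by
          apply ContinuousAt.div continuousAt_id (by fun_prop); simpa using ha)
      exact ((continuousAt_const.mul h1).mul (by fun_prop)).add (by fun_prop)
    refine hcont.eventually_ne ?_
    simpa using mul_ne_zero (mul_ne_zero hc hτ0) ha
  have hpunct : ∀ᶠ z in nhdsWithin (0:ℂ) {(0:ℂ)}ᶜ,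
      τ z = c * (a + b * z) * τ (z / (a + b * z)) + d * z := by
    rw [eventually_nhdsWithin_iff]
    filter_upwards [heq, hστ, e2, e3, e4, e5, e6] with z h1 h2 h3 h4 h5 h6 h7 hz
    have hz' : z ≠ 0 := by simpa using hz
    rw [h2, h3] at h1
    exact ptwise a b c d z (τ z) (τ (z / (a + b * z))) hz' h7 h5 h4 h6 h1
  have hrhs : AnalyticAt ℂ
      (fun z => c * (a + b * z) * τ (z / (a + b * z)) + d * z) 0 :=
    (((analyticAt_const.mul (analyticAt_const.add
      (analyticAt_const.mul analyticAt_id))).mul (comp_analytic τ hτ a b ha)).add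
      (analyticAt_const.mul analyticAt_id))
  have hev : ∀ᶠ z in nhds (0:ℂ),
      τ z = c * (a + b * z) * τ (z / (a + b * z)) + d * z :=
    (hτ.frequently_eq_iff_eventually_eq hrhs).mp hpunct.frequently
  have hca : c * a = 1 := by
    have h0 := hev.self_of_nhds
    simp only [mul_zero, add_zero, zero_div] at h0
    have h1 : (c * a) * τ 0 = 1 * τ 0 := by rw [one_mul]; linear_combination -h0
    exact mul_right_cancel₀ hτ0 h1
  exact ⟨hca, hev⟩

end Stmt5Aux

open Stmt5Aux in
/-- If a germ `σ ∈ Diff(ℂ,0)` has infinitely many homographic symmetries, then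
`σ` is itself a homography, and every homography fixing `0` is then a
homographic symmetry of `σ`. -/
theorem stmt_5 (σ : ℂ → ℂ) (hσ : AnalyticAt ℂ σ 0) (hσ0 : σ 0 = 0)
    (hσ' : deriv σ 0 ≠ 0)
    (hinf : {p : ℂ × ℂ | IsHomographicSymmetry σ p}.Infinite) :
    (∃ a' b' : ℂ, a' ≠ 0 ∧
        ∀ᶠ z in nhds (0 : ℂ), σ z = z / (a' + b' * z)) ∧
      ∀ a b : ℂ, a ≠ 0 → IsHomographicSymmetry σ (a, b) := by
  -- Step 1: factor σ z = z * g z with g 0 ≠ 0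
  have hne : ¬ (∀ᶠ z in nhds (0:ℂ), σ z = 0) := by
    intro h
    have hd : deriv σ 0 = deriv (fun _ : ℂ => (0:ℂ)) 0 :=
      Filter.EventuallyEq.deriv_eq (h : σ =ᶠ[nhds 0] fun _ => 0)
    simp at hd
    exact hσ' hd
  obtain ⟨n, g, hg, hg0, hfac⟩ := (hσ.exists_eventuallyEq_pow_smul_nonzero_iff).mpr hne
  simp only [sub_zero, smul_eq_mul] at hfac
  have hfac1 : ∀ᶠ z in nhds (0:ℂ), σ z = z * g z := by
    rcases n with _ | n
    · exfalso
      have h0 := hfac.self_of_nhds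
      simp [hσ0] at h0
      exact hg0 h0.symm
    rcases n with _ | n
    · simpa using hfac
    · exfalso
      have hd : HasDerivAt (fun z : ℂ => z ^ (n+2) * g z)
          ((↑(n+2) * (0:ℂ) ^ (n+2-1)) * g 0 + (0:ℂ) ^ (n+2) * deriv g 0) 0 :=
        (hasDerivAt_pow (n+2) 0).mul (hg.differentiableAt.hasDerivAt)
      have hd0 : deriv σ 0 = deriv (fun z : ℂ => z ^ (n+2) * g z) 0 :=
        Filter.EventuallyEq.deriv_eq hfac
      rw [hd.deriv] at hd0
      simp at hd0
      exact hσ' hd0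
  -- Step 2: τ = g⁻¹
  set τ : ℂ → ℂ := fun z => (g z)⁻¹ with hτ_def
  have hτ : AnalyticAt ℂ τ 0 := hg.inv hg0
  have hτ0 : τ 0 ≠ 0 := inv_ne_zero hg0
  have hστ : ∀ᶠ z in nhds (0:ℂ), σ z = z / τ z := by
    filter_upwards [hfac1] with z h1
    rw [h1, hτ_def]
    simp [div_eq_mul_inv]
  -- Step 3: the "nonlinear part" G
  set t₀ : ℂ := τ 0 with ht₀
  set t₁ : ℂ := deriv τ 0 with ht₁
  set G : ℂ → ℂ := fun z => τ z - t₀ - t₁ * z with hG_def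
  have hG : AnalyticAt ℂ G 0 :=
    (hτ.sub analyticAt_const).sub (analyticAt_const.mul analyticAt_id)
  have hG0 : G 0 = 0 := by simp [hG_def, ht₀]
  have hGd : HasDerivAt G (t₁ - t₁ * 1) 0 :=
    ((hτ.differentiableAt.hasDerivAt).sub_const t₀).sub ((hasDerivAt_id 0).const_mul t₁)
  have hG'0 : deriv G 0 = 0 := by rw [hGd.deriv]; ring
  by_cases hGz : ∀ᶠ z in nhds (0:ℂ), G z = 0
  · -- σ is a homography
    have hev' : ∀ᶠ z in nhds (0:ℂ), σ z = z / (t₀ + t₁ * z) := by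
      filter_upwards [hστ, hGz] with z h1 h2
      rw [h1]
      congr 1
      simp only [hG_def] at h2
      linear_combination h2
    exact ⟨⟨t₀, t₁, hτ0, hev'⟩, fun a b ha => homog_sym σ t₀ t₁ hτ0 hev' a b ha⟩
  · exfalso
    obtain ⟨n, H, hH, hH0, hHfac⟩ := (hG.exists_eventuallyEq_pow_smul_nonzero_iff).mpr hGz
    simp only [sub_zero, smul_eq_mul] at hHfac
    -- n ≥ 2
    rcases n with _ | n
    · have h0 := hHfac.self_of_nhds
      simp [hG0] at h0
      exact hH0 h0.symm
    rcases n with _ | m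
    · -- n = 1 : contradicts deriv G 0 = 0
      have hd : HasDerivAt (fun z : ℂ => z ^ 1 * H z)
          ((↑(1:ℕ) * (0:ℂ) ^ (1-1)) * H 0 + (0:ℂ) ^ 1 * deriv H 0) 0 :=
        (hasDerivAt_pow 1 0).mul (hH.differentiableAt.hasDerivAt)
      have hd0 : deriv G 0 = deriv (fun z : ℂ => z ^ 1 * H z) 0 :=
        Filter.EventuallyEq.deriv_eq hHfac
      rw [hd.deriv] at hd0
      simp at hd0
      rw [hG'0] at hd0
      exact hH0 hd0.symm
    -- n = m + 2
    set β : ℂ → ℂ := fun x =>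
      deriv H 0 * (x⁻¹ - 1) / ((((m:ℂ)+1)) * x^(m+1) * H 0) with hβ
    have hsub : {p : ℂ × ℂ | IsHomographicSymmetry σ p}
        ⊆ (fun x : ℂ => (x, β x)) '' {x : ℂ | x^(m+2) = 1} := by
      rintro ⟨a, b⟩ hp
      obtain ⟨ha, c, d, hc, heq0⟩ := hp
      have ha : a ≠ 0 := ha
      have heq : ∀ᶠ z in nhds (0:ℂ),
          σ (z / (a + b * z)) / (c + d * σ (z / (a + b * z))) = σ z := heq0
      obtain ⟨hca, hev⟩ := tau_eq σ τ hτ hτ0 hστ a b c d ha hc heq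
      have e6 := e6_ev a b ha
      set lam : ℂ := c * b * t₀ + c * t₁ + d - t₁ with hlam_def
      have hGev : ∀ᶠ z in nhds (0:ℂ),
          G z = lam * z + c * (a + b * z) * G (z / (a + b * z)) := by
        filter_upwards [hev, e6] with z h1 h6
        have hu' : (a + b * z) * (z / (a + b * z)) = z := by field_simp
        simp only [hG_def]
        linear_combination h1 + c * t₁ * hu' + t₀ * hca
      -- lam = 0
      have hGd0 : HasDerivAt G 0 ((0:ℂ) / (a + b * 0)) := by
        rw [zero_div]
        simpa [hG'0] using hG.differentiableAt.hasDerivAt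
      have hcompd : HasDerivAt (fun z : ℂ => G (z / (a + b * z)))
          (0 * ((1 * (a + b * 0) - 0 * (b * 1)) / (a + b * 0) ^ 2)) 0 :=
        by have := HasDerivAt.comp 0 hGd0 (u_hasDeriv a b ha); exact this
      have hmuld : HasDerivAt (fun z : ℂ => c * (a + b * z) * G (z / (a + b * z)))
          ((c * (b * 1)) * G ((0:ℂ) / (a + b * 0))
            + (c * (a + b * 0)) * (0 * ((1 * (a + b * 0) - 0 * (b * 1)) / (a + b * 0) ^ 2))) 0 :=
        ((((hasDerivAt_id 0).const_mul b).const_add a).const_mul c).mul hcompd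
      have hfulld := ((hasDerivAt_id 0).const_mul lam).add hmuld
      have hdeq : deriv G 0
          = deriv (fun z : ℂ => lam * z + c * (a + b * z) * G (z / (a + b * z))) 0 :=
        Filter.EventuallyEq.deriv_eq hGev
      have hval := hdeq.trans hfulld.deriv
      rw [hG'0] at hval
      simp only [zero_div, hG0, mul_zero, zero_mul, add_zero, mul_one] at hval
      have hlam : lam = 0 := hval.symm
      have hGev2 : ∀ᶠ z in nhds (0:ℂ),
          G z = c * (a + b * z) * G (z / (a + b * z)) := by
        filter_upwards [hGev] with z h1
        rw [h1, hlam]; ring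
      have hHfacu : ∀ᶠ z in nhds (0:ℂ),
          G (z / (a + b * z)) = (z / (a + b * z))^(m+2) * H (z / (a + b * z)) :=
        (u_tendsto a b ha).eventually hHfac
      have hpunct : ∀ᶠ z in nhdsWithin (0:ℂ) {(0:ℂ)}ᶜ,
          a * (a + b * z)^(m+1) * H z = H (z / (a + b * z)) := by
        rw [eventually_nhdsWithin_iff]
        filter_upwards [hGev2, hHfac, hHfacu, e6] with z h1 h2 h3 h6 hz
        have hz' : z ≠ 0 := by simpa using hz
        rw [h2, h3, div_pow] at h1
        have h6p : (a + b * z)^(m+2) ≠ 0 := pow_ne_zero _ h6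
        rw [div_mul_eq_mul_div, mul_div_assoc'] at h1
        have h1' := (div_eq_iff h6p).mp h1.symm
        -- h1' : c * (a+b*z) * (z^(m+2) * H (u z)) = z^(m+2) * H z * (a+b*z)^(m+2)
        refine mul_left_cancel₀ (pow_ne_zero (m+2) hz') (mul_left_cancel₀ h6 ?_)
        linear_combination -a * h1' + ((a + b*z) * z^(m+2) * H (z / (a + b * z))) * hca
      have hLan : AnalyticAt ℂ (fun z : ℂ => a * (a + b * z)^(m+1) * H z) 0 :=
        ((analyticAt_const.mul ((analyticAt_const.add
          (analyticAt_const.mul analyticAt_id)).pow (m+1))).mul hH)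
      have hRan : AnalyticAt ℂ (fun z : ℂ => H (z / (a + b * z))) 0 :=
        comp_analytic H hH a b ha
      have hev2 : ∀ᶠ z in nhds (0:ℂ),
          a * (a + b * z)^(m+1) * H z = H (z / (a + b * z)) :=
        (hLan.frequently_eq_iff_eventually_eq hRan).mp hpunct.frequently
      have h00 := hev2.self_of_nhds
      simp only [mul_zero, add_zero, zero_div] at h00
      have hroot : a^(m+2) = 1 := by
        have h1 : a^(m+2) * H 0 = 1 * H 0 := by
          rw [one_mul, pow_succ]
          linear_combination h00
        exact mul_right_cancel₀ hH0 h1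
      -- derivative relation pinning b
      have hHd0 : HasDerivAt H (deriv H 0) ((0:ℂ) / (a + b * 0)) := by
        rw [zero_div]; exact hH.differentiableAt.hasDerivAt
      have hRd : HasDerivAt (fun z : ℂ => H (z / (a + b * z)))
          (deriv H 0 * ((1 * (a + b * 0) - 0 * (b * 1)) / (a + b * 0) ^ 2)) 0 :=
        by have := HasDerivAt.comp 0 hHd0 (u_hasDeriv a b ha); exact this
      have hLd : HasDerivAt (fun z : ℂ => a * (a + b * z)^(m+1) * H z)
          ((a * (↑(m+1) * (a + b * 0) ^ (m+1-1) * (b * 1))) * H 0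
            + (a * (a + b * 0)^(m+1)) * deriv H 0) 0 :=
        ((((((hasDerivAt_id 0).const_mul b).const_add a).pow (m+1)).const_mul a).mul
          (hH.differentiableAt.hasDerivAt))
      have hdeq2 : deriv (fun z : ℂ => a * (a + b * z)^(m+1) * H z) 0
          = deriv (fun z : ℂ => H (z / (a + b * z))) 0 :=
        Filter.EventuallyEq.deriv_eq hev2
      have hvals := (hLd.deriv.symm.trans hdeq2).trans hRd.deriv
      simp only [mul_zero, add_zero, mul_one, one_mul, zero_mul, sub_zero,
        Nat.add_sub_cancel] at hvals
      -- hdeq2 : a * ((m+1) * a^m * b) * H 0 + a * a^(m+1) * deriv H 0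
      --         = deriv H 0 * (a / a^2)
      refine ⟨a, hroot, ?_⟩
      have hm1 : ((m:ℂ) + 1) ≠ 0 := Nat.cast_add_one_ne_zero m
      have hb : β a = b := by
        show deriv H 0 * (a⁻¹ - 1) / (((m:ℂ) + 1) * a ^ (m + 1) * H 0) = b
        rw [div_eq_iff (mul_ne_zero (mul_ne_zero hm1 (pow_ne_zero _ ha)) hH0)]
        field_simp at hvals
        push_cast at hvals
        have hinv : a * a⁻¹ = 1 := mul_inv_cancel₀ ha
        have e : a * ((((m:ℂ)+1) * b * H 0) + a * deriv H 0) = a * deriv H 0 := by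
          linear_combination a * hvals - (((m:ℂ)+1) * a * b * H 0 + a^2 * deriv H 0) * hroot
        have e2 := mul_left_cancel₀ ha e
        linear_combination (-(a⁻¹)) * e2 - (((m:ℂ)+1) * b * H 0 * a⁻¹) * hroot
          + ((((m:ℂ)+1) * b * H 0 * a^(m+1)) + deriv H 0) * hinv
      exact Prod.ext rfl hb
    -- finiteness
    have hfin : ({x : ℂ | x^(m+2) = 1}).Finite := by
      have hpol : (Polynomial.X^(m+2) - Polynomial.C (1:ℂ)) ≠ 0 :=
        Polynomial.X_pow_sub_C_ne_zero (by omega) 1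
      have h := Polynomial.finite_setOf_isRoot hpol
      convert h using 1
      ext x
      simp [Polynomial.IsRoot, sub_eq_zero]
    exact hinf ((hfin.image _).subset hsub)
end

section
/- In the formal power series ring ℂ⟦x,y⟧ (MvPowerSeries over ℂ in two variables), the element x³y² does not belong to the ideal generated by 2x³y − y³ and xy² − x⁴. -/
open MvPowerSeries Finsupp

private noncomputable def E (i j : ℕ) : Fin 2 →₀ ℕ := single 0 i + single 1 j

private lemma E0 (i j : ℕ) : E i j 0 = i := by simp [E, single_apply]
private lemma E1 (i j : ℕ) : E i j 1 = j := by simp [E, single_apply]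

private lemma Ele {i j k l : ℕ} (h0 : i ≤ k) (h1 : j ≤ l) : E i j ≤ E k l := by
  intro s; fin_cases s <;> simp [E0, E1, h0, h1]

private lemma Enle0 {i j k l : ℕ} (h : ¬ i ≤ k) : ¬ E i j ≤ E k l := by
  intro h'; exact h (by simpa [E0] using h' 0)

private lemma Enle1 {i j k l : ℕ} (h : ¬ j ≤ l) : ¬ E i j ≤ E k l := by
  intro h'; exact h (by simpa [E1] using h' 1)

private lemma Esub {i j k l : ℕ} (h0 : k ≤ i) (h1 : l ≤ j) :
    E i j - E k l = E (i - k) (j - l) := by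
  ext s; fin_cases s <;> simp [tsub_apply, E0, E1]

private lemma Ene0 {i j k l : ℕ} (h : i ≠ k) : E i j ≠ E k l := by
  intro h'; exact h (by rw [← E0 i j, h', E0])

private lemma hmon (i j : ℕ) (c : ℂ) :
    (MvPowerSeries.C (σ := Fin 2) (R := ℂ) c) * X 0 ^ i * X 1 ^ j = monomial (E i j) c := by
  rw [X_pow_eq, X_pow_eq, MvPowerSeries.C]
  show MvPowerSeries.monomial 0 c * _ * _ = _
  rw [monomial_mul_monomial, monomial_mul_monomial, zero_add, mul_one, mul_one, E]

/-- In `ℂ⟦x,y⟧`, the element `x³y²` does not belong to the ideal generated by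
`2x³y − y³` and `xy² − x⁴`. -/
theorem stmt_9 :
    (X 0 ^ 3 * X 1 ^ 2 : MvPowerSeries (Fin 2) ℂ) ∉
      Ideal.span ({2 * X 0 ^ 3 * X 1 - X 1 ^ 3, X 0 * X 1 ^ 2 - X 0 ^ 4} :
        Set (MvPowerSeries (Fin 2) ℂ)) := by
  intro h
  rw [Ideal.mem_span_pair] at h
  obtain ⟨a, b, hab⟩ := h
  have h1 : (2 * X 0 ^ 3 * X 1 : MvPowerSeries (Fin 2) ℂ) = monomial (E 3 1) 2 := by
    rw [← hmon 3 1 2, map_ofNat]; ring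
  have h2 : (X 1 ^ 3 : MvPowerSeries (Fin 2) ℂ) = monomial (E 0 3) 1 := by
    rw [← hmon 0 3 1, map_one]; ring
  have h3 : (X 0 * X 1 ^ 2 : MvPowerSeries (Fin 2) ℂ) = monomial (E 1 2) 1 := by
    rw [← hmon 1 2 1, map_one]; ring
  have h4 : (X 0 ^ 4 : MvPowerSeries (Fin 2) ℂ) = monomial (E 4 0) 1 := by
    rw [← hmon 4 0 1, map_one]; ring
  have h5 : (X 0 ^ 3 * X 1 ^ 2 : MvPowerSeries (Fin 2) ℂ) = monomial (E 3 2) 1 := by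
    rw [← hmon 3 2 1, map_one]; ring
  rw [h1, h2, h3, h4, h5] at hab
  have key : ∀ m : Fin 2 →₀ ℕ,
      coeff m (a * monomial (E 3 1) 2) - coeff m (a * monomial (E 0 3) 1)
        + (coeff m (b * monomial (E 1 2) 1) - coeff m (b * monomial (E 4 0) 1))
        = coeff m (monomial (E 3 2) 1) := by
    intro m
    have := congrArg (coeff m) hab
    simpa [mul_sub, map_sub, map_add] using this
  have q1 := key (E 3 2)
  have q2 := key (E 6 0)
  have q3 := key (E 0 4)
  rw [coeff_mul_monomial, coeff_mul_monomial, coeff_mul_monomial, coeff_mul_monomial,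
      if_pos (Ele (by norm_num) (by norm_num)), if_neg (Enle1 (by norm_num)),
      if_pos (Ele (by norm_num) (by norm_num)), if_neg (Enle0 (by norm_num)),
      coeff_monomial_same, Esub (by norm_num) (by norm_num),
      Esub (by norm_num) (by norm_num)] at q1
  rw [coeff_mul_monomial, coeff_mul_monomial, coeff_mul_monomial, coeff_mul_monomial,
      if_neg (Enle1 (by norm_num)), if_neg (Enle1 (by norm_num)),
      if_neg (Enle1 (by norm_num)), if_pos (Ele (by norm_num) (by norm_num)),
      coeff_monomial, if_neg (Ene0 (by norm_num)),
      Esub (by norm_num) (by norm_num)] at q2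
  rw [coeff_mul_monomial, coeff_mul_monomial, coeff_mul_monomial, coeff_mul_monomial,
      if_neg (Enle0 (by norm_num)), if_pos (Ele (by norm_num) (by norm_num)),
      if_neg (Enle0 (by norm_num)), if_neg (Enle0 (by norm_num)),
      coeff_monomial, if_neg (Ene0 (by norm_num)),
      Esub (by norm_num) (by norm_num)] at q3
  norm_num at q1 q2 q3
  have : (1 : ℂ) = 0 := by linear_combination 2 * q3 + q2 - q1
  exact one_ne_zero this
end

section
/- Let R > 0, and let U : ℂ → ℂ be analytic on {z ∈ ℂ : ‖z‖ > R} with U(z) → 0 as ‖z‖ → ∞ (i.e. U tends to 0 along the cobounded filter). Let G be an infinite subgroup of the multiplicative group ℂ* such that for every a ∈ G and every z ∈ ℂ with ‖z‖ > R and ‖a·z‖ > R one has U(a·z) = U(z). Then U(z) = 0 for every z with ‖z‖ > R. -/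
open Filter

/-- Helper: produce elements of `G` (an infinite subgroup of the unit circle)
arbitrarily close to `1` but different from `1`. -/
lemma stmt_11_aux (G : Subgroup ℂˣ) (hG : (G : Set ℂˣ).Infinite)
    (hone : ∀ a ∈ G, ‖(a : ℂ)‖ = 1) :
    ∀ ε : ℝ, 0 < ε → ∃ b : ℂˣ, b ∈ G ∧ (b : ℂ) ≠ 1 ∧ ‖(b : ℂ) - 1‖ < ε := by
  intro ε hε
  set S : Set ℂ := (fun u : ℂˣ => (u : ℂ)) '' (G : Set ℂˣ) with hS
  have hSinf : S.Infinite := hG.image (Set.injOn_of_injective (fun _ _ h => Units.ext h))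
  have hSsub : S ⊆ Metric.sphere (0 : ℂ) 1 := by
    rintro - ⟨u, hu, rfl⟩
    simpa using hone u hu
  obtain ⟨c, -, hacc⟩ := hSinf.exists_accPt_of_subset_isCompact
    (isCompact_sphere (0 : ℂ) 1) hSsub
  have hfreq : ∃ᶠ y in nhds c, y ≠ c ∧ y ∈ S := accPt_iff_frequently.mp hacc
  -- find a point of S close to c, distinct from c
  have key : ∀ r : ℝ, 0 < r → ∃ y ∈ S, y ≠ c ∧ dist y c < r := by
    intro r hr
    have hev : ∀ᶠ y in nhds c, dist y c < r :=
      Metric.eventually_nhds_iff.mpr ⟨r, hr, fun {y} h => h⟩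
    obtain ⟨y, ⟨hyne, hyS⟩, hyd⟩ := (hfreq.and_eventually hev).exists
    exact ⟨y, hyS, hyne, hyd⟩
  obtain ⟨w₁, hw₁S, hw₁ne, hw₁d⟩ := key (ε / 2) (by linarith)
  obtain ⟨w₂, hw₂S, hw₂ne, hw₂d⟩ := key (min (ε / 2) (dist w₁ c))
    (lt_min (by linarith) (by simpa [dist_eq_zero] using hw₁ne))
  have hw12 : w₁ ≠ w₂ := by
    intro h
    exact absurd (h ▸ (hw₂d.trans_le (min_le_right _ _))) (lt_irrefl _)
  obtain ⟨u₁, hu₁, rfl⟩ := hw₁S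
  obtain ⟨u₂, hu₂, rfl⟩ := hw₂S
  refine ⟨u₁ * u₂⁻¹, mul_mem hu₁ (inv_mem hu₂), ?_, ?_⟩
  · intro h
    apply hw12
    have : ((u₁ : ℂ) * (u₂ : ℂ)⁻¹) = 1 := by simpa using h
    field_simp at this
    exact this
  · have hn2 : ‖(u₂ : ℂ)‖ = 1 := hone u₂ hu₂
    have : ((u₁ * u₂⁻¹ : ℂˣ) : ℂ) - 1 = ((u₁ : ℂ) - (u₂ : ℂ)) * ((u₂ : ℂ))⁻¹ := by
      rw [Units.val_mul, Units.val_inv_eq_inv_val, sub_mul, mul_inv_cancel₀ u₂.ne_zero]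
    rw [this, norm_mul, norm_inv, hn2]
    have hd : ‖(u₁ : ℂ) - (u₂ : ℂ)‖ < ε := by
      have := dist_triangle (u₁ : ℂ) c (u₂ : ℂ)
      have h2 : dist c (u₂ : ℂ) < ε / 2 := by
        rw [dist_comm]; exact hw₂d.trans_le (min_le_left _ _)
      have : dist (u₁ : ℂ) (u₂ : ℂ) < ε := by linarith
      simpa [dist_eq_norm] using this
    simpa using hd

/-- If `U` is analytic on `{‖z‖ > R}`, tends to `0` at infinity, and is
invariant under an infinite subgroup `G` of `ℂ*` (acting linearly, whenever both
points lie in the domain), then `U` vanishes identically on `{‖z‖ > R}`. -/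
theorem stmt_11 (R : ℝ) (hR : 0 < R) (U : ℂ → ℂ)
    (hU : AnalyticOnNhd ℂ U {z : ℂ | R < ‖z‖})
    (hlim : Tendsto U (Bornology.cobounded ℂ) (nhds 0))
    (G : Subgroup ℂˣ) (hG : (G : Set ℂˣ).Infinite)
    (hinv : ∀ a ∈ G, ∀ z : ℂ, R < ‖z‖ → R < ‖(a : ℂ) * z‖ →
      U ((a : ℂ) * z) = U z) :
    ∀ z : ℂ, R < ‖z‖ → U z = 0 := by
  by_cases hone : ∀ a ∈ G, ‖(a : ℂ)‖ = 1
  · -- all elements on the unit circle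
    intro z hz
    have hz0 : (0 : ℝ) < ‖z‖ := hR.trans hz
    set H : Set ℂ := {w : ℂ | R / ‖z‖ < w.re} with hH
    have hmem : ∀ w ∈ H, R < ‖w * z‖ := by
      intro w hw
      have h1 : R / ‖z‖ < ‖w‖ := by
        exact lt_of_lt_of_le hw ((le_abs_self w.re).trans (Complex.abs_re_le_norm w))
      rw [norm_mul]
      calc R = R / ‖z‖ * ‖z‖ := (div_mul_cancel₀ R hz0.ne').symm
        _ < ‖w‖ * ‖z‖ := mul_lt_mul_of_pos_right h1 hz0
    have hh : AnalyticOnNhd ℂ (fun w => U (w * z)) H := by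
      intro w hw
      have h2 : AnalyticAt ℂ (fun w : ℂ => w * z) w := (analyticAt_id).mul analyticAt_const
      exact AnalyticAt.comp (hU (w * z) (hmem w hw)) h2
    have hpre : IsPreconnected H := (convex_halfSpace_re_gt (R / ‖z‖)).isPreconnected
    have h1H : (1 : ℂ) ∈ H := by
      simp only [hH, Set.mem_setOf_eq, Complex.one_re]
      exact (div_lt_one hz0).mpr hz
    have hfreq : ∃ᶠ w in nhdsWithin (1 : ℂ) {(1:ℂ)}ᶜ, U (w * z) = U z := by
      rw [(Metric.nhdsWithin_basis_ball).frequently_iff]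
      intro ε hε
      obtain ⟨b, hb, hbne, hbd⟩ := stmt_11_aux G hG hone ε hε
      refine ⟨(b : ℂ), ⟨?_, hbne⟩, ?_⟩
      · simpa [Metric.mem_ball, dist_eq_norm] using hbd
      · exact hinv b hb z hz (by rw [norm_mul, hone b hb, one_mul]; exact hz)
    have heq := hh.eqOn_of_preconnected_of_frequently_eq
      (analyticOnNhd_const (v := U z)) hpre h1H hfreq
    -- now let w → ∞ along the positive real axis
    have htend : Tendsto (fun t : ℝ => ((t : ℂ) * z)) atTop (Bornology.cobounded ℂ) := by
      rw [← tendsto_norm_atTop_iff_cobounded]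
      have : Tendsto (fun t : ℝ => |t| * ‖z‖) atTop atTop :=
        (tendsto_abs_atTop_atTop).atTop_mul_const hz0
      refine this.congr fun t => ?_
      rw [norm_mul, Complex.norm_real, Real.norm_eq_abs]
    have hUc : Tendsto (fun t : ℝ => U ((t : ℂ) * z)) atTop (nhds 0) := hlim.comp htend
    have hev : ∀ᶠ t : ℝ in atTop, U ((t : ℂ) * z) = U z := by
      filter_upwards [eventually_gt_atTop (R / ‖z‖)] with t ht
      exact heq (by simpa [hH] using ht)
    have : Tendsto (fun _ : ℝ => U z) atTop (nhds 0) := hUc.congr' (by filter_upwards [hev] with t ht using ht)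
    exact tendsto_nhds_unique tendsto_const_nhds this
  · -- some element has norm ≠ 1
    push_neg at hone
    obtain ⟨a₀, ha₀G, ha₀⟩ := hone
    -- get an element of norm > 1
    obtain ⟨a, haG, han⟩ : ∃ a ∈ G, 1 < ‖(a : ℂ)‖ := by
      rcases lt_or_gt_of_ne ha₀ with h | h
      · refine ⟨a₀⁻¹, inv_mem ha₀G, ?_⟩
        have h0 : (0 : ℝ) < ‖(a₀ : ℂ)‖ := norm_pos_iff.mpr a₀.ne_zero
        rw [Units.val_inv_eq_inv_val, norm_inv]
        exact (one_lt_inv₀ h0).mpr h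
      · exact ⟨a₀, ha₀G, h⟩
    intro z hz
    have hz0 : (0 : ℝ) < ‖z‖ := hR.trans hz
    have key : ∀ n : ℕ, R < ‖(a : ℂ) ^ n * z‖ ∧ U ((a : ℂ) ^ n * z) = U z := by
      intro n
      induction n with
      | zero => simpa using hz
      | succ n ih =>
        have hstep : ((a : ℂ) ^ (n + 1) * z) = (a : ℂ) * ((a : ℂ) ^ n * z) := by
          rw [pow_succ']; ring
        have hn' : R < ‖(a : ℂ) * ((a : ℂ) ^ n * z)‖ := by
          rw [norm_mul]
          calc R < ‖(a : ℂ) ^ n * z‖ := ih.1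
            _ = 1 * ‖(a : ℂ) ^ n * z‖ := (one_mul _).symm
            _ < ‖(a : ℂ)‖ * ‖(a : ℂ) ^ n * z‖ :=
                mul_lt_mul_of_pos_right han (hR.trans ih.1)
        constructor
        · rw [hstep]; exact hn'
        · rw [hstep, hinv a haG _ ih.1 hn']; exact ih.2
    have htend : Tendsto (fun n : ℕ => (a : ℂ) ^ n * z) atTop (Bornology.cobounded ℂ) := by
      rw [← tendsto_norm_atTop_iff_cobounded]
      have : Tendsto (fun n : ℕ => ‖(a : ℂ)‖ ^ n * ‖z‖) atTop atTop :=
        (tendsto_pow_atTop_atTop_of_one_lt han).atTop_mul_const hz0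
      refine this.congr fun n => ?_
      rw [norm_mul, norm_pow]
    have hUc : Tendsto (fun n : ℕ => U ((a : ℂ) ^ n * z)) atTop (nhds 0) := hlim.comp htend
    have : Tendsto (fun _ : ℕ => U z) atTop (nhds 0) :=
      hUc.congr fun n => (key n).2
    exact tendsto_nhds_unique tendsto_const_nhds this
end
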